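/- Let λ : (0, t₀] → ℝ be a differentiable function satisfying the Riccati inequality λ' + λ² ≤ 1. Then λ(t₀) ≤ cosh(t₀)/sinh(t₀) = coth(t₀). -/

import Mathlib

set_option maxHeartbeats 800000

/-- Auxiliary: `sinh x ≤ x * cosh x` for `0 ≤ x`. -/
lemma sinh_le_mul_cosh {x : ℝ} (hx : 0 ≤ x) : Real.sinh x ≤ x * Real.cosh x := by
  have key : MonotoneOn (fun t : ℝ => t * Real.cosh t - Real.sinh t) (Set.Icc 0 x) := by
    have hderiv : ∀ t : ℝ, HasDerivAt (fun t : ℝ => t * Real.cosh t - Real.sinh t)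
        (t * Real.sinh t) t := by
      intro t
      have h := ((hasDerivAt_id t).mul (Real.hasDerivAt_cosh t)).sub (Real.hasDerivAt_sinh t)
      refine h.congr_deriv ?_
      simp only [id_eq]
      ring
    apply monotoneOn_of_deriv_nonneg (convex_Icc _ _)
    · exact fun t _ => ((hderiv t).continuousAt).continuousWithinAt
    · exact fun t _ => ((hderiv t).differentiableAt).differentiableWithinAt
    · intro t ht
      rw [interior_Icc] at ht
      rw [(hderiv t).deriv]
      exact mul_nonneg ht.1.le (Real.sinh_nonneg_iff.mpr ht.1.le)
  have h0 : (0:ℝ) ∈ Set.Icc (0:ℝ) x := ⟨le_refl 0, hx⟩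
  have hxx : x ∈ Set.Icc (0:ℝ) x := ⟨hx, le_refl x⟩
  have := key h0 hxx hx
  simp only [Real.sinh_zero, Real.cosh_zero, mul_one, zero_mul, sub_zero, zero_sub, neg_zero] at this
  linarith

/-- a differentiable function on `(0, t₀]` satisfying the
Riccati inequality `λ' + λ² ≤ 1` satisfies `λ(t₀) ≤ cosh t₀ / sinh t₀`. -/
theorem stmt8 (t₀ : ℝ) (ht₀ : 0 < t₀) (lam lam' : ℝ → ℝ)
    (hderiv : ∀ t ∈ Set.Ioc (0 : ℝ) t₀, HasDerivAt lam (lam' t) t)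
    (hriccati : ∀ t ∈ Set.Ioc (0 : ℝ) t₀, lam' t + (lam t) ^ 2 ≤ 1) :
    lam t₀ ≤ Real.cosh t₀ / Real.sinh t₀ := by
  by_contra hcon
  push_neg at hcon
  set φ : ℝ → ℝ := fun t => Real.sinh t ^ 2 * lam t - Real.sinh t * Real.cosh t with hφdef
  set φ' : ℝ → ℝ := fun t => 2 * Real.sinh t * Real.cosh t * lam t + Real.sinh t ^ 2 * lam' t
      - (Real.cosh t ^ 2 + Real.sinh t ^ 2) with hφ'def
  have hφderiv : ∀ t ∈ Set.Ioc (0:ℝ) t₀, HasDerivAt φ (φ' t) t := by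
    intro t ht
    have h1 := Real.hasDerivAt_sinh t
    have h2 := Real.hasDerivAt_cosh t
    have h := ((h1.pow 2).mul (hderiv t ht)).sub (h1.mul h2)
    refine h.congr_deriv ?_
    simp only [hφ'def, Pi.pow_apply]
    ring
  have hφ'nonpos : ∀ t ∈ Set.Ioc (0:ℝ) t₀, φ' t ≤ 0 := by
    intro t ht
    have h := hriccati t ht
    have hs : (0:ℝ) ≤ Real.sinh t ^ 2 := sq_nonneg _
    simp only [hφ'def]
    nlinarith [sq_nonneg (Real.sinh t * lam t - Real.cosh t),
      mul_nonneg hs (by linarith : (0:ℝ) ≤ 1 - (lam' t + lam t ^ 2))]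
  clear_value φ φ'
  -- φ is antitone: φ t₀ ≤ φ ε for ε ∈ (0, t₀]
  have hmono : ∀ ε ∈ Set.Ioc (0:ℝ) t₀, φ t₀ ≤ φ ε := by
    intro ε hε
    have hsub : Set.Icc ε t₀ ⊆ Set.Ioc 0 t₀ := fun x hx => ⟨lt_of_lt_of_le hε.1 hx.1, hx.2⟩
    have hanti : AntitoneOn φ (Set.Icc ε t₀) := by
      apply antitoneOn_of_deriv_nonpos (convex_Icc _ _)
      · exact fun x hx => ((hφderiv x (hsub hx)).continuousAt).continuousWithinAt
      · intro x hx
        rw [interior_Icc] at hx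
        exact ((hφderiv x (hsub (Set.Ioo_subset_Icc_self hx))).differentiableAt).differentiableWithinAt
      · intro x hx
        rw [interior_Icc] at hx
        rw [(hφderiv x (hsub (Set.Ioo_subset_Icc_self hx))).deriv]
        exact hφ'nonpos x (hsub (Set.Ioo_subset_Icc_self hx))
    exact hanti ⟨le_refl ε, hε.2⟩ ⟨hε.2, le_refl t₀⟩ hε.2
  set c : ℝ := φ t₀ with hc
  clear_value c
  have hs₀ : 0 < Real.sinh t₀ := Real.sinh_pos_iff.mpr ht₀
  have hcpos : 0 < c := by
    have : Real.cosh t₀ / Real.sinh t₀ * Real.sinh t₀ < lam t₀ * Real.sinh t₀ :=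
      mul_lt_mul_of_pos_right hcon hs₀
    rw [div_mul_cancel₀ _ (ne_of_gt hs₀)] at this
    simp only [hc, hφdef]
    nlinarith [sq_nonneg (Real.sinh t₀)]
  -- lower bound for lam
  have hlb : ∀ t ∈ Set.Ioc (0:ℝ) t₀, c / Real.sinh t ^ 2 ≤ lam t := by
    intro t ht
    have hst : 0 < Real.sinh t := Real.sinh_pos_iff.mpr ht.1
    have hct : 0 < Real.cosh t := Real.cosh_pos t
    have h1 : c ≤ φ t := hmono t ht
    rw [div_le_iff₀ (by positivity)]
    simp only [hφdef] at h1
    nlinarith [mul_pos hst hct]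
  -- choose δ
  set δ : ℝ := min t₀ (min 1 (c / 100)) with hδdef
  clear_value δ
  have hδpos : 0 < δ := by
    rw [hδdef]; exact lt_min ht₀ (lt_min one_pos (by positivity))
  have hδt₀ : δ ≤ t₀ := by rw [hδdef]; exact min_le_left _ _
  have hδ1 : δ ≤ 1 := by
    rw [hδdef]; exact le_trans (min_le_right _ _) (min_le_left _ _)
  have hδc : δ ≤ c / 100 := by
    rw [hδdef]; exact le_trans (min_le_right _ _) (min_le_right _ _)
  -- on (0, δ], sinh t ≤ 3 t, hence lam t ≥ c / (9 t²) ≥ 2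
  have hsinh_bound : ∀ t ∈ Set.Ioc (0:ℝ) δ, Real.sinh t ≤ 3 * t := by
    intro t ht
    have h1 : Real.sinh t ≤ t * Real.cosh t := sinh_le_mul_cosh ht.1.le
    have h2 : Real.cosh t ≤ Real.exp t := by
      rw [Real.cosh_eq]
      have : Real.exp (-t) ≤ Real.exp t := Real.exp_le_exp.mpr (by linarith [ht.1])
      linarith
    have h3 : Real.exp t ≤ Real.exp 1 := Real.exp_le_exp.mpr (le_trans ht.2 hδ1)
    have h4 : Real.exp 1 < 3 := by
      have := Real.exp_one_lt_d9
      linarith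
    nlinarith [ht.1]
  have hlam_big : ∀ t ∈ Set.Ioc (0:ℝ) δ, 2 ≤ lam t := by
    intro t ht
    have htt : t ∈ Set.Ioc (0:ℝ) t₀ := ⟨ht.1, le_trans ht.2 hδt₀⟩
    have h1 := hlb t htt
    have hst : 0 < Real.sinh t := Real.sinh_pos_iff.mpr ht.1
    have h2 : Real.sinh t ^ 2 ≤ 9 * t ^ 2 := by nlinarith [hsinh_bound t ht, hst]
    have h3 : c / (9 * t ^ 2) ≤ c / Real.sinh t ^ 2 := by
      apply div_le_div_of_nonneg_left hcpos.le (by positivity) h2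
    have h4 : 2 ≤ c / (9 * t ^ 2) := by
      rw [le_div_iff₀ (by nlinarith [ht.1] : (0:ℝ) < 9 * t ^ 2)]
      have ht2 : t ^ 2 ≤ δ * δ := by nlinarith [ht.2, ht.1]
      have hdd : δ * δ ≤ (c / 100) * 1 := mul_le_mul hδc hδ1 hδpos.le (by positivity)
      nlinarith [ht2, hdd, hcpos]
    linarith
  -- g = 1/lam on [δ/2, δ]
  set g : ℝ → ℝ := fun t => (lam t)⁻¹ with hgdef
  clear_value g
  have hgd : ∀ t ∈ Set.Icc (δ/2) δ, HasDerivAt g (-(lam' t) / lam t ^ 2) t := by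
    intro t ht
    have htIoc : t ∈ Set.Ioc (0:ℝ) δ := ⟨lt_of_lt_of_le (by linarith) ht.1, ht.2⟩
    have hne : lam t ≠ 0 := by have := hlam_big t htIoc; linarith
    rw [hgdef]
    exact (hderiv t ⟨htIoc.1, le_trans htIoc.2 hδt₀⟩).inv hne
  -- h = g - t/2 is monotone on [δ/2, δ]
  have hmono2 : MonotoneOn (fun t => g t - t / 2) (Set.Icc (δ/2) δ) := by
    apply monotoneOn_of_deriv_nonneg (convex_Icc _ _)
    · intro t ht
      exact (((hgd t ht).sub ((hasDerivAt_id t).div_const 2)).continuousAt).continuousWithinAt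
    · intro t ht
      have ht' : t ∈ Set.Icc (δ/2) δ := Set.Ioo_subset_Icc_self (by rwa [interior_Icc] at ht)
      exact (((hgd t ht').sub ((hasDerivAt_id t).div_const 2)).differentiableAt).differentiableWithinAt
    · intro t ht
      rw [interior_Icc] at ht
      have ht' : t ∈ Set.Icc (δ/2) δ := Set.Ioo_subset_Icc_self ht
      have hd : HasDerivAt (fun t => g t - t / 2) (-(lam' t) / lam t ^ 2 - 1 / 2) t :=
        (hgd t ht').sub ((hasDerivAt_id t).div_const 2)
      rw [hd.deriv]
      have htIoc : t ∈ Set.Ioc (0:ℝ) δ := ⟨lt_of_lt_of_le (by linarith [hδpos]) ht.1.le, ht.2.le⟩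
      have hl2 : 2 ≤ lam t := hlam_big t htIoc
      have hric := hriccati t ⟨htIoc.1, le_trans htIoc.2 hδt₀⟩
      have hsq : (0:ℝ) < lam t ^ 2 := by positivity
      have key : 1/2 ≤ -(lam' t) / lam t ^ 2 := by
        rw [le_div_iff₀ hsq]
        nlinarith
      linarith
  have hmem1 : δ/2 ∈ Set.Icc (δ/2) δ := ⟨le_refl _, by linarith⟩
  have hmem2 : δ ∈ Set.Icc (δ/2) δ := ⟨by linarith, le_refl _⟩
  have hineq := hmono2 hmem1 hmem2 (by linarith)
  -- g(δ/2) > 0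
  have hg1 : 0 < g (δ/2) := by
    have : 2 ≤ lam (δ/2) := hlam_big (δ/2) ⟨by linarith, by linarith⟩
    simp only [hgdef]
    positivity
  have hgδ : δ / 4 ≤ g δ := by
    simp only at hineq
    linarith
  -- but g δ ≤ sinh²δ / c ≤ 9δ²/c ≤ 9δ/100
  have hδIoc : δ ∈ Set.Ioc (0:ℝ) t₀ := ⟨hδpos, hδt₀⟩
  have hlδ := hlb δ hδIoc
  have hsδ : 0 < Real.sinh δ := Real.sinh_pos_iff.mpr hδpos
  have hlδpos : 0 < lam δ := by have := hlam_big δ ⟨hδpos, le_refl δ⟩; linarith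
  have hgub : g δ ≤ Real.sinh δ ^ 2 / c := by
    simp only [hgdef]
    have h1 : (lam δ)⁻¹ ≤ (c / Real.sinh δ ^ 2)⁻¹ :=
      inv_anti₀ (by positivity) hlδ
    rwa [inv_div] at h1
  -- contradiction
  have hsb : Real.sinh δ ≤ 3 * δ := hsinh_bound δ ⟨hδpos, le_refl δ⟩
  have h9 : Real.sinh δ ^ 2 ≤ 9 * δ ^ 2 := by nlinarith
  have hfin : Real.sinh δ ^ 2 / c ≤ 9 * δ / 100 := by
    rw [div_le_iff₀ hcpos]
    nlinarith [hδc, hδpos]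
  linarith
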